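/- (Main theorem.) Let τ be a nonempty finite type, n : ℕ, and r : List τ → ℝ. Suppose V : List τ → ℝ satisfies the local max constraint and the boundary condition for r. Let y* be a list over τ of length n such that r y* ≥ r y for every list y over τ of length n. Then for every i ≤ n and every list s over τ with length s ≤ n, V (y*.take i) ≥ V s; that is, every prefix of an optimal full sequence is scored at least as high as any other partial sequence. -/

import Mathlib

/-- `V` satisfies the local max constraint: for every list `s` over `τ` with
`s.length < n`, `V s` equals the maximum over tokens `t : τ` of `V (s ++ [t])`. -/
def LocalMaxConstraint {τ : Type*} [Fintype τ] [Nonempty τ] (n : ℕ) (V : List τ → ℝ) : Prop :=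
  ∀ s : List τ, s.length < n →
    V s = Finset.univ.sup' Finset.univ_nonempty (fun t : τ => V (s ++ [t]))

/-- `V` satisfies the boundary condition for `r`: `V y = r y` for every
full sequence `y` (list of length `n`). -/
def BoundaryCondition {τ : Type*} (n : ℕ) (r V : List τ → ℝ) : Prop :=
  ∀ y : List τ, y.length = n → V y = r y

/-- Main theorem: if `V` satisfies the local max constraint and the boundary condition
for `r`, and `y*` is an optimal full sequence (its reward is at least that of every
full sequence), then every prefix `y*.take i` (`i ≤ n`) is scored by `V` at least as
high as any other partial sequence `s` with `s.length ≤ n`. -/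
theorem prefix_of_optimal_scores_highest {τ : Type*} [Fintype τ] [Nonempty τ]
    (n : ℕ) (r V : List τ → ℝ)
    (hmax : LocalMaxConstraint n V) (hbd : BoundaryCondition n r V)
    (ystar : List τ) (hlen : ystar.length = n)
    (hopt : ∀ y : List τ, y.length = n → r y ≤ r ystar) :
    ∀ i ≤ n, ∀ s : List τ, s.length ≤ n → V s ≤ V (ystar.take i) := by
  -- Step 1: every partial sequence scores at most V ystar.
  have hA : ∀ k : ℕ, ∀ s : List τ, s.length ≤ n → n - s.length ≤ k → V s ≤ V ystar := by
    intro k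
    induction k with
    | zero =>
      intro s hs h0
      have hsn : s.length = n := le_antisymm hs (by omega)
      rw [hbd s hsn, hbd ystar hlen]
      exact hopt s hsn
    | succ k ih =>
      intro s hs hk
      rcases eq_or_lt_of_le hs with h | h
      · rw [hbd s h, hbd ystar hlen]; exact hopt s h
      · rw [hmax s h]
        apply Finset.sup'_le
        intro t _
        exact ih (s ++ [t]) (by simp; omega) (by simp; omega)
  -- Step 2: V ystar ≤ V (ystar.take i) for i ≤ n.
  have hB : ∀ j : ℕ, ∀ i ≤ n, n - i ≤ j → V ystar ≤ V (ystar.take i) := by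
    intro j
    induction j with
    | zero =>
      intro i hi h0
      have : i = n := by omega
      rw [this, hlen.symm, List.take_length]
    | succ j ih =>
      intro i hi hj
      rcases eq_or_lt_of_le hi with h | h
      · rw [h, hlen.symm, List.take_length]
      · have hlt : (ystar.take i).length < n := by
          simp [List.length_take, hlen]; omega
        calc V ystar ≤ V (ystar.take (i + 1)) := ih (i + 1) (by omega) (by omega)
          _ = V (ystar.take i ++ [ystar.get ⟨i, by omega⟩]) := by
              congr 1
              rw [← List.take_concat_get (by omega : i < ystar.length), List.concat_eq_append]
              simp
          _ ≤ _ := by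
              rw [hmax (ystar.take i) hlt]
              exact Finset.le_sup' (fun t => V (ystar.take i ++ [t])) (Finset.mem_univ _)
  intro i hi s hs
  exact (hA (n - s.length) s hs le_rfl).trans (hB (n - i) i hi le_rfl)
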